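/- Let M be a symmetric square matrix over the two-element field 𝔽₂, and let d be its diagonal vector, d i = M i i. Then d lies in the range of the linear map w ↦ M·w; in particular there always exists a vector w with M·w = d (a characteristic vector for M). -/

import Mathlib

open Matrix Finset

/-- The dot-product bilinear form on `n → ZMod 2`. -/
noncomputable def dotForm (n : Type*) [Fintype n] :
    LinearMap.BilinForm (ZMod 2) (n → ZMod 2) :=
  LinearMap.mk₂ (ZMod 2) (fun x y => x ⬝ᵥ y)
    (fun x y z => add_dotProduct x y z)
    (fun c x y => smul_dotProduct c x y)
    (fun x y z => dotProduct_add x y z)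
    (fun c x y => dotProduct_smul c x y)

lemma dotForm_apply {n : Type*} [Fintype n] (x y : n → ZMod 2) :
    dotForm n x y = x ⬝ᵥ y := rfl

lemma dotForm_nondegenerate (n : Type*) [Fintype n] [DecidableEq n] :
    (dotForm n).Nondegenerate := by
  refine (LinearMap.IsRefl.nondegenerate_iff_separatingLeft (B := dotForm n)
    (fun x y h => by rw [dotForm_apply, dotProduct_comm]; exact h)).mpr ?_
  intro x hx
  funext i
  have := hx (Pi.single i 1)
  rwa [dotForm_apply, dotProduct_single, mul_one] at this

lemma dotForm_refl (n : Type*) [Fintype n] : (dotForm n).IsRefl := by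
  intro x y h
  rw [dotForm_apply, dotProduct_comm]
  exact h

/-- Over `ZMod 2`, for a symmetric matrix, `v ⬝ᵥ M v = ∑ i, M i i * v i`. -/
lemma quad_eq_diag {n : Type*} [Fintype n] [DecidableEq n]
    (M : Matrix n n (ZMod 2)) (hsymm : M.IsSymm) (v : n → ZMod 2) :
    v ⬝ᵥ M.mulVec v = ∑ i, M i i * v i := by
  have hsym : ∀ i j, M j i = M i j := fun i j => by
    rw [← Matrix.IsSymm.apply hsymm i j]
  have hexp : v ⬝ᵥ M.mulVec v
      = ∑ p ∈ Finset.univ ×ˢ Finset.univ, v p.1 * M p.1 p.2 * v p.2 := by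
    simp only [dotProduct, Matrix.mulVec, Finset.mul_sum, mul_assoc]
    rw [← Finset.sum_product']
  rw [hexp, ← Finset.diag_union_offDiag (Finset.univ : Finset n),
    Finset.sum_union (Finset.disjoint_diag_offDiag _)]
  have h1 : ∑ p ∈ Finset.univ.diag, v p.1 * M p.1 p.2 * v p.2 = ∑ i, M i i * v i := by
    rw [Finset.sum_diag]
    refine Finset.sum_congr rfl fun i _ => ?_
    have : v i * v i = v i := by
      have : ∀ x : ZMod 2, x * x = x := by decide
      exact this (v i)
    calc v i * M i i * v i = M i i * (v i * v i) := by ring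
      _ = M i i * v i := by rw [this]
  have h2 : ∑ p ∈ Finset.univ.offDiag, v p.1 * M p.1 p.2 * v p.2 = 0 := by
    refine Finset.sum_involution (fun p _ => p.swap) ?_ ?_ ?_ ?_
    · intro p hp
      have : M p.2 p.1 = M p.1 p.2 := hsym p.1 p.2
      have h2 : ∀ x : ZMod 2, x + x = 0 := by decide
      simp only [Prod.fst_swap, Prod.snd_swap, this]
      calc v p.1 * M p.1 p.2 * v p.2 + v p.2 * M p.1 p.2 * v p.1
          = (v p.1 * M p.1 p.2 * v p.2) + (v p.1 * M p.1 p.2 * v p.2) := by ring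
        _ = 0 := h2 _
    · intro p hp _
      obtain ⟨-, -, hne⟩ := Finset.mem_offDiag.mp hp
      intro h
      exact hne (congrArg Prod.fst h).symm
    · intro p hp
      obtain ⟨h1', h2', hne⟩ := Finset.mem_offDiag.mp hp
      exact Finset.mem_offDiag.mpr ⟨h2', h1', fun h => hne h.symm⟩
    · intro p _; exact Prod.swap_swap p
  rw [h1, h2, add_zero]

/-- Let `M` be a symmetric square matrix over the two-element field
`𝔽₂ = ZMod 2`, and let `d` be its diagonal vector, `d i = M i i`.  Then `d` lies in the range
of the linear map `w ↦ M·w`; in particular there always exists a vector `w` with `M·w = d`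
(a characteristic vector for `M`). -/
theorem exists_characteristic_vector {n : Type*} [Fintype n] [DecidableEq n]
    (M : Matrix n n (ZMod 2)) (hsymm : M.IsSymm) :
    (fun i => M i i) ∈ LinearMap.range M.mulVecLin ∧
      ∃ w : n → ZMod 2, M.mulVec w = fun i => M i i := by
  set d : n → ZMod 2 := fun i => M i i with hd
  set U := LinearMap.range M.mulVecLin with hU
  have key : d ∈ U := by
    rw [← LinearMap.BilinForm.orthogonal_orthogonal (dotForm_nondegenerate n)
      (dotForm_refl n) U]
    intro v hv
    -- v is orthogonal to all of U, i.e. to all `M w`.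
    have hMv : M.mulVec v = 0 := by
      funext j
      have := hv (M.mulVec (Pi.single j 1)) ⟨Pi.single j 1, rfl⟩
      rw [dotForm_apply, dotProduct_comm,
        Matrix.dotProduct_mulVec] at this
      have hvM : Matrix.vecMul v M = M.mulVec v := by
        rw [← Matrix.mulVec_transpose, hsymm]
      rw [hvM, dotProduct_single, mul_one] at this
      simpa using this
    have h0 : v ⬝ᵥ M.mulVec v = 0 := by rw [hMv, dotProduct_zero]
    rw [quad_eq_diag M hsymm v] at h0
    rw [dotForm_apply, dotProduct_comm]
    simpa [dotProduct, hd] using h0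
  obtain ⟨w, hw⟩ := key
  exact ⟨⟨w, hw⟩, w, hw⟩
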